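/- arXiv:2402.05838 — 3 statements merged into one kernel-verified Lean document; each statement's English description precedes it below -/
import Mathlib

section
/- (q-Vandermonde identity for words.) For all words x, y, u ∈ A*: binom_q(xy, u) = Σ q^{|u_1|·(|y|−|u_2|)}·binom_q(x,u_1)·binom_q(y,u_2), where the sum ranges over all factorizations u = u_1 u_2 with u_1, u_2 ∈ A* and |u_2| ≤ |y| (the terms with |u_2| > |y| vanish since then binom_q(y,u_2) = 0). -/
noncomputable def qbinAux {A : Type*} [DecidableEq A] : List A → List A → Polynomial ℕ
  | _, [] => 1
  | [], _ :: _ => 0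
  | a :: u, b :: v =>
      Polynomial.X ^ (v.length + 1) * qbinAux u (b :: v) +
        (if a = b then qbinAux u v else 0)

/-- The `q`-binomial coefficient `binom_q(u,v)` of two words. -/
noncomputable def qbin {A : Type*} [DecidableEq A] (u v : List A) : Polynomial ℕ :=
  qbinAux u.reverse v.reverse

lemma qbinAux_nil_right {A : Type*} [DecidableEq A] (u : List A) : qbinAux u [] = 1 := by
  cases u <;> simp [qbinAux]

lemma qbinAux_eq_zero {A : Type*} [DecidableEq A] :
    ∀ (u v : List A), u.length < v.length → qbinAux u v = 0
  | [], [], h => by simp at h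
  | [], b :: v, _ => rfl
  | a :: u, [], h => by simp at h
  | a :: u, b :: v, h => by
    have h1 : u.length < (b :: v).length := by simp at h ⊢; omega
    have h2 : u.length < v.length := by simp at h ⊢; omega
    rw [qbinAux, qbinAux_eq_zero u (b :: v) h1, qbinAux_eq_zero u v h2]
    simp

lemma vander' {A : Type*} [DecidableEq A] (Y X U : List A) :
    qbinAux (Y ++ X) U =
      ∑ k ∈ (Finset.range (U.length + 1)).filter (fun k => k ≤ Y.length),
        Polynomial.X ^ ((U.length - k) * (Y.length - k)) *
          qbinAux Y (U.take k) * qbinAux X (U.drop k) := by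
  induction Y generalizing U with
  | nil =>
    have hs : (Finset.range (U.length + 1)).filter
        (fun k => k ≤ ([] : List A).length) = {0} := by
      ext k
      simp only [Finset.mem_filter, Finset.mem_range, Finset.mem_singleton, List.length_nil]
      omega
    rw [hs]
    simp [qbinAux_nil_right]
  | cons b Y' ih =>
    cases U with
    | nil =>
      have hs : (Finset.range (0 + 1)).filter (fun k => k ≤ (b :: Y').length) = {0} := by
        ext k
        simp only [Finset.mem_filter, Finset.mem_range, Finset.mem_singleton, List.length_cons]
        omega
      simp only [List.length_nil, hs]
      simp [qbinAux_nil_right]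
    | cons c U' =>
      rw [List.cons_append, qbinAux, ih (c :: U'), ih U']
      simp only [Finset.sum_filter, List.length_cons]
      rw [Finset.sum_range_succ', Finset.sum_range_succ' (n := U'.length + 1)]
      simp only [List.take_zero, List.drop_zero, qbinAux_nil_right, Nat.sub_zero,
        Nat.zero_le, if_true, mul_one, Nat.add_sub_add_right, Nat.add_le_add_iff_right]
      rw [mul_add, Finset.mul_sum]
      have hdelta : (if b = c then
            ∑ k ∈ Finset.range (U'.length + 1), (if k ≤ Y'.length then
              Polynomial.X ^ ((U'.length - k) * (Y'.length - k)) * qbinAux Y' (U'.take k) *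
                qbinAux X (U'.drop k) else 0) else 0)
          = ∑ k ∈ Finset.range (U'.length + 1), (if b = c then (if k ≤ Y'.length then
              Polynomial.X ^ ((U'.length - k) * (Y'.length - k)) * qbinAux Y' (U'.take k) *
                qbinAux X (U'.drop k) else 0) else 0) := by
        split_ifs <;> simp
      rw [hdelta, add_right_comm, ← Finset.sum_add_distrib]
      congr 1
      · apply Finset.sum_congr rfl
        intro k hk
        have hkn : k ≤ U'.length := by
          simpa [Nat.lt_succ_iff] using hk
        have htake : (c :: U').take (k + 1) = c :: U'.take k := rfl
        have hlen : (U'.take k).length = k := by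
          simp [List.length_take]; omega
        have hqc : qbinAux (b :: Y') (c :: U'.take k) =
            Polynomial.X ^ (k + 1) * qbinAux Y' (c :: U'.take k) +
              (if b = c then qbinAux Y' (U'.take k) else 0) := by
          rw [qbinAux, hlen]
        simp only [htake, List.drop_succ_cons, hqc]
        by_cases hkm1 : k + 1 ≤ Y'.length
        · have hkm : k ≤ Y'.length := by omega
          simp only [hkm1, hkm, if_true]
          obtain ⟨d, hd⟩ : ∃ d, Y'.length - k = d + 1 := ⟨Y'.length - k - 1, by omega⟩
          obtain ⟨e, he⟩ : ∃ e, U'.length = e + k := ⟨U'.length - k, by omega⟩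
          have h1 : Y'.length - (k + 1) = d := by omega
          have h2 : U'.length - k = e := by omega
          rw [h1, hd, h2, he]
          have e1 : (Polynomial.X : Polynomial ℕ) ^ (e + k + 1) *
              (Polynomial.X ^ (e * d) * qbinAux Y' (c :: U'.take k) * qbinAux X (U'.drop k))
              = Polynomial.X ^ ((e + k + 1) + e * d) * qbinAux Y' (c :: U'.take k) *
                qbinAux X (U'.drop k) := by ring
          rw [e1, show (e + k + 1) + e * d = e * (d + 1) + (k + 1) by ring]
          split_ifs <;> ring
        · by_cases hkm : k ≤ Y'.length
          · have hz : qbinAux Y' (c :: U'.take k) = 0 := by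
              apply qbinAux_eq_zero
              simp [hlen]; omega
            simp only [hkm1, hkm, if_true, if_false, hz, mul_zero, zero_add]
            split_ifs <;> ring
          · simp only [hkm1, hkm, if_false, mul_zero, zero_add]
            split_ifs <;> simp
      · rw [← mul_assoc, ← pow_add,
          show (U'.length + 1) + (U'.length + 1) * Y'.length
            = (U'.length + 1) * (Y'.length + 1) by ring]

/-- The `q`-Vandermonde identity for words:
`binom_q(xy,u) = Σ_{u = u₁u₂, |u₂| ≤ |y|} q^{|u₁|(|y|-|u₂|)} binom_q(x,u₁) binom_q(y,u₂)`.
Factorizations `u = u₁u₂` are indexed by the length `j` of `u₁`. -/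
theorem qbin_vandermonde (A : Type*) [Fintype A] [DecidableEq A] (x y u : List A) :
    qbin (x ++ y) u =
      ∑ j ∈ (Finset.range (u.length + 1)).filter (fun j => u.length - j ≤ y.length),
        Polynomial.X ^ (j * (y.length - (u.length - j))) *
          qbin x (u.take j) * qbin y (u.drop j) := by
  rw [qbin, List.reverse_append, vander' y.reverse x.reverse u.reverse]
  simp only [List.length_reverse]
  refine Finset.sum_nbij' (i := fun k => u.length - k) (j := fun j => u.length - j)
    ?_ ?_ ?_ ?_ ?_
  · intro k hk
    simp only [Finset.mem_filter, Finset.mem_range] at hk ⊢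
    omega
  · intro j hj
    simp only [Finset.mem_filter, Finset.mem_range] at hj ⊢
    omega
  · intro k hk
    simp only [Finset.mem_filter, Finset.mem_range] at hk
    show u.length - (u.length - k) = k
    omega
  · intro j hj
    simp only [Finset.mem_filter, Finset.mem_range] at hj
    show u.length - (u.length - j) = j
    omega
  · intro k hk
    simp only [Finset.mem_filter, Finset.mem_range] at hk
    have h1 : u.length - (u.length - k) = k := by omega
    have ht : (u.take (u.length - k)).reverse = u.reverse.drop k := by
      rw [List.reverse_take, h1]
    have hd : (u.drop (u.length - k)).reverse = u.reverse.take k := by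
      rw [List.reverse_drop, h1]
    rw [qbin, qbin, ht, hd, h1]
    ring
end

section
/- For every word u over A and every integer n ≥ 0: Σ_{v ∈ A^n} binom_q(u,v) = gauss(|u|, n), where the sum ranges over all words v of length n over A. Consequently, for all words u, v and every i ≥ 0, the coefficient of q^i in binom_q(u,v) is at most the coefficient of q^i in gauss(|u|, |v|). -/
/-- The Gaussian binomial coefficient `gauss(m,n) ∈ ℕ[q]`. -/
noncomputable def gauss : ℕ → ℕ → Polynomial ℕ
  | _, 0 => 1
  | 0, _ + 1 => 0
  | m + 1, n + 1 => Polynomial.X ^ (n + 1) * gauss m (n + 1) + gauss m n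

lemma qbinAux_cons {A : Type*} [DecidableEq A] (a b : A) (u v : List A) :
    qbinAux (a :: u) (b :: v) =
      Polynomial.X ^ (v.length + 1) * qbinAux u (b :: v) +
        (if a = b then qbinAux u v else 0) := by
  rw [qbinAux]

lemma qbinAux_sum {A : Type*} [Fintype A] [DecidableEq A] (u : List A) (n : ℕ) :
    ∑ v : Fin n → A, qbinAux u (List.ofFn v) = gauss u.length n := by
  induction u generalizing n with
  | nil =>
    cases n with
    | zero => simp [qbinAux, gauss]
    | succ m =>
      rw [List.length_nil, show gauss 0 (m + 1) = 0 from rfl]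
      apply Finset.sum_eq_zero
      intro v _
      rw [List.ofFn_succ, qbinAux]
  | cons a u ih =>
    cases n with
    | zero => simp [qbinAux, gauss]
    | succ m =>
      have key : ∀ v : Fin (m + 1) → A,
          qbinAux (a :: u) (List.ofFn v) =
            Polynomial.X ^ (m + 1) * qbinAux u (List.ofFn v) +
              (if a = v 0 then qbinAux u (List.ofFn (v ∘ Fin.succ)) else 0) := by
        intro v
        rw [List.ofFn_succ, qbinAux_cons, List.length_ofFn, ← List.ofFn_succ]
        rfl
      rw [Finset.sum_congr rfl fun v _ => key v, Finset.sum_add_distrib,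
        ← Finset.mul_sum, ih]
      have h2 : (∑ v : Fin (m + 1) → A,
          (if a = v 0 then qbinAux u (List.ofFn (v ∘ Fin.succ)) else 0)) =
          gauss u.length m := by
        rw [← ih m]
        rw [← Equiv.sum_comp (Fin.consEquiv (fun _ : Fin (m + 1) => A))
          (fun v : Fin (m + 1) → A =>
            if a = v 0 then qbinAux u (List.ofFn (v ∘ Fin.succ)) else 0)]
        rw [Fintype.sum_prod_type]
        have : ∀ b : A, ∀ w : Fin m → A,
            (if a = ((Fin.consEquiv (fun _ : Fin (m + 1) => A)) (b, w)) 0 then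
              qbinAux u (List.ofFn (((Fin.consEquiv (fun _ : Fin (m + 1) => A)) (b, w)) ∘ Fin.succ)) else 0)
            = if a = b then qbinAux u (List.ofFn w) else 0 := by
          intro b w
          have h0 : ((Fin.consEquiv (fun _ : Fin (m + 1) => A)) (b, w)) 0 = b := rfl
          have hs : ((Fin.consEquiv (fun _ : Fin (m + 1) => A)) (b, w)) ∘ Fin.succ = w := by
            funext i; simp [Fin.consEquiv, Fin.cases_succ]
          rw [h0, hs]
        simp only [this]
        rw [Finset.sum_comm]
        simp
      rw [h2]
      rfl

lemma ofFn_comp_rev {A : Type*} {n : ℕ} (v : Fin n → A) :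
    List.ofFn (v ∘ Fin.rev) = (List.ofFn v).reverse := by
  apply List.ext_getElem
  · simp
  · intro i h1 h2
    simp only [List.getElem_ofFn, List.getElem_reverse, Function.comp_apply]
    congr 1
    simp only [List.length_ofFn] at h2 ⊢
    ext
    simp [Fin.rev]
    omega

lemma qbin_sum {A : Type*} [Fintype A] [DecidableEq A] (u : List A) (n : ℕ) :
    ∑ v : Fin n → A, qbin u (List.ofFn v) = gauss u.length n := by
  unfold qbin
  have : ∀ v : Fin n → A, (List.ofFn v).reverse = List.ofFn (v ∘ Fin.rev) :=
    fun v => (ofFn_comp_rev v).symm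
  simp only [this]
  rw [← u.length_reverse, ← qbinAux_sum u.reverse n]
  exact Fintype.sum_bijective (fun v : Fin n → A => v ∘ Fin.rev)
    (Function.Involutive.bijective (fun v => by funext i; simp))
    _ _ (fun v => rfl)

/-- `Σ_{v ∈ A^n} binom_q(u,v) = gauss(|u|,n)` (words of length `n` being
parametrized by functions `Fin n → A`); consequently every coefficient of
`binom_q(u,v)` is at most the corresponding coefficient of `gauss(|u|,|v|)`. -/
theorem qbin_sum_over_subwords (A : Type*) [Fintype A] [DecidableEq A] :
    (∀ (u : List A) (n : ℕ),
      ∑ v : Fin n → A, qbin u (List.ofFn v) = gauss u.length n) ∧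
    (∀ (u v : List A) (i : ℕ),
      (qbin u v).coeff i ≤ (gauss u.length v.length).coeff i) := by
  refine ⟨qbin_sum, fun u v i => ?_⟩
  rw [← qbin_sum u v.length, Polynomial.finset_sum_coeff]
  have hv : List.ofFn v.get = v := List.ofFn_get v
  calc (qbin u v).coeff i = (qbin u (List.ofFn v.get)).coeff i := by rw [hv]
    _ ≤ ∑ w : Fin v.length → A, (qbin u (List.ofFn w)).coeff i :=
        Finset.single_le_sum
          (f := fun w : Fin v.length → A => (qbin u (List.ofFn w)).coeff i)
          (fun w _ => Nat.zero_le _) (Finset.mem_univ v.get)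
end

section
/- For every word u ∈ A* and all letters a_1, …, a_n ∈ A: u ⧢_q (a_1⋯a_n) = Σ q^{Σ_{i=1}^n i·|u_i|} · (u_0 a_1 u_1 a_2 ⋯ u_{n-1} a_n u_n), where the sum ranges over all factorizations u = u_0 u_1 ⋯ u_n with u_0, …, u_n ∈ A*. -/
/-- Auxiliary definition of the `q`-shuffle, with both input words and all
output words reversed (so that the recursion of the paper, which appends
letters on the right, becomes a recursion on heads of lists). -/
noncomputable def qShuffleAux {A : Type*} [DecidableEq A] :
    List A → List A → (List A →₀ Polynomial ℕ)
  | [], v => Finsupp.single v 1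
  | a :: u, [] => Finsupp.single (a :: u) 1
  | a :: u, b :: v =>
      (Polynomial.X : Polynomial ℕ) ^ (v.length + 1) •
          Finsupp.mapDomain (a :: ·) (qShuffleAux u (b :: v)) +
        Finsupp.mapDomain (b :: ·) (qShuffleAux (a :: u) v)

/-- The `q`-shuffle `u ⧢_q v` of two words, a noncommutative polynomial
(finitely supported function from words to `ℕ[q]`), defined by
`u ⧢_q ε = ε ⧢_q u = 1·u` and
`ua ⧢_q vb = q^{|vb|}·(u ⧢_q vb)·a + (ua ⧢_q v)·b`. -/
noncomputable def qShuffle {A : Type*} [DecidableEq A] (u v : List A) :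
    List A →₀ Polynomial ℕ :=
  Finsupp.mapDomain List.reverse (qShuffleAux u.reverse v.reverse)

/-- `glue [u₀, u₁, …, u_n] [a₁, …, a_n] = u₀ a₁ u₁ a₂ ⋯ u_{n-1} a_n u_n`. -/
def glue {A : Type*} : List (List A) → List A → List A
  | [], as => as
  | u0 :: us, [] => u0 ++ glue us []
  | u0 :: us, a :: as => u0 ++ a :: glue us as

/-- The weight `Σ_{i} i·|uᵢ|` of a factorization `[u₀, u₁, …, u_n]`. -/
def qweight {A : Type*} (us : List (List A)) : ℕ :=
  ∑ i ∈ Finset.range us.length, i * (us.getD i []).length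


section AuxDefs
variable {A : Type*}

/-- recursive weight: `Σ_j (n-j)·|u_j|`. -/
def rweight : List (List A) → ℕ
  | [] => 0
  | t :: rest => rest.length * t.length + rweight rest

/-- all factorizations of `u` into `n+1` parts. -/
def facts : ℕ → List A → List (List (List A))
  | 0, u => [[u]]
  | n+1, [] => (facts n []).map ([] :: ·)
  | n+1, a :: u =>
      ((facts (n+1) u).map fun ws => (a :: ws.headI) :: ws.tail) ++
        ((facts n (a :: u)).map ([] :: ·))
termination_by n u => (n, u.length)

theorem mem_facts : ∀ (n : ℕ) (u : List A) (us : List (List A)),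
    us ∈ facts n u ↔ us.length = n + 1 ∧ us.flatten = u
  | 0, u, us => by
    simp only [facts, List.mem_singleton]
    constructor
    · rintro rfl; simp
    · rintro ⟨h1, h2⟩
      obtain ⟨t, rfl⟩ := List.length_eq_one_iff.1 h1
      simp at h2; subst h2; rfl
  | n+1, [], us => by
    simp only [facts, List.mem_map]
    constructor
    · rintro ⟨ws, hws, rfl⟩
      obtain ⟨h1, h2⟩ := (mem_facts n [] ws).1 hws
      simp [h1, h2]
    · rintro ⟨h1, h2⟩
      cases us with
      | nil => simp at h1
      | cons t rest =>
        simp only [List.flatten_cons, List.append_eq_nil_iff] at h2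
        obtain ⟨rfl, h2⟩ := h2
        exact ⟨rest, (mem_facts n [] rest).2 ⟨by simpa using h1, h2⟩, rfl⟩
  | n+1, a :: u, us => by
    simp only [facts, List.mem_append, List.mem_map]
    constructor
    · rintro (⟨ws, hws, rfl⟩ | ⟨ws, hws, rfl⟩)
      · obtain ⟨h1, h2⟩ := (mem_facts (n+1) u ws).1 hws
        cases ws with
        | nil => simp at h1
        | cons t rest =>
          simp only [List.headI, List.tail_cons]
          refine ⟨by simpa using h1, ?_⟩
          simp only [List.flatten_cons] at h2 ⊢
          simp [h2]
      · obtain ⟨h1, h2⟩ := (mem_facts n (a :: u) ws).1 hws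
        exact ⟨by simp [h1], by simp [h2]⟩
    · rintro ⟨h1, h2⟩
      cases us with
      | nil => simp at h1
      | cons t rest =>
        cases t with
        | nil =>
          right
          refine ⟨rest, (mem_facts n (a :: u) rest).2 ⟨by simpa using h1, by simpa using h2⟩, rfl⟩
        | cons a' t' =>
          left
          simp only [List.flatten_cons, List.cons_append, List.cons.injEq] at h2
          obtain ⟨rfl, h2⟩ := h2
          exact ⟨t' :: rest, (mem_facts (n+1) u (t' :: rest)).2
            ⟨by simpa using h1, by simpa using h2⟩, rfl⟩
termination_by n u => (n, u.length)

theorem facts_length_pos {n : ℕ} {u : List A} {us : List (List A)}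
    (h : us ∈ facts n u) : us ≠ [] := by
  obtain ⟨h1, -⟩ := (mem_facts n u us).1 h
  intro h'; subst h'; simp at h1

theorem facts_nodup : ∀ (n : ℕ) (u : List A), (facts n u).Nodup
  | 0, u => by simp [facts]
  | n+1, [] => by
    simpa [facts] using (facts_nodup n []).map (fun x y h => by simpa using h)
  | n+1, a :: u => by
    simp only [facts]
    refine List.Nodup.append ?_ ?_ ?_
    · refine (facts_nodup (n+1) u).map_on ?_
      intro x hx y hy hxy
      cases x with
      | nil => exact absurd rfl (facts_length_pos hx)
      | cons tx rx =>
        cases y with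
        | nil => exact absurd rfl (facts_length_pos hy)
        | cons ty ry => simpa using hxy
    · exact (facts_nodup n (a :: u)).map (fun x y h => by simpa using h)
    · intro x hx hy
      simp only [List.mem_map] at hx hy
      obtain ⟨ws, -, rfl⟩ := hx
      obtain ⟨ws', -, h⟩ := hy
      simp at h
termination_by n u => (n, u.length)

theorem glue_replicate (n : ℕ) (v : List A) : glue (List.replicate n []) v = v := by
  induction n generalizing v with
  | zero => rfl
  | succ n ih => cases v <;> simp [List.replicate_succ, glue, ih]

theorem rweight_replicate (n : ℕ) : rweight (List.replicate n ([] : List A)) = 0 := by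
  induction n with
  | zero => rfl
  | succ n ih => simp [List.replicate_succ, rweight, ih]

theorem facts_nil (n : ℕ) : facts n ([] : List A) = [List.replicate (n+1) []] := by
  induction n with
  | zero => simp [facts]
  | succ n ih => simp [facts, ih, List.replicate_succ]

theorem glue_append_singleton :
    ∀ (cs : List A) (xs : List (List A)) (t : List A) (b : A),
    xs.length = cs.length + 1 →
    glue (xs ++ [t]) (cs ++ [b]) = glue xs cs ++ b :: t
  | [], xs, t, b, h => by
    obtain ⟨x, rfl⟩ := List.length_eq_one_iff.1 h
    simp [glue]
  | c :: cs, xs, t, b, h => by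
    cases xs with
    | nil => simp at h
    | cons x xs =>
      have := glue_append_singleton cs xs t b (by simpa using h)
      simp only [List.cons_append, glue, List.append_eq, this, List.append_assoc]

theorem glue_reverse :
    ∀ (bs : List A) (ws : List (List A)), ws.length = bs.length + 1 →
    (glue ws bs).reverse = glue ((ws.map List.reverse).reverse) bs.reverse
  | [], ws, h => by
    obtain ⟨w, rfl⟩ := List.length_eq_one_iff.1 h
    simp [glue]
  | b :: bs, ws, h => by
    cases ws with
    | nil => simp at h
    | cons w0 rest =>
      have hlen : rest.length = bs.length + 1 := by simpa using h
      simp only [glue, List.reverse_append, List.reverse_cons, List.map_cons]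
      rw [glue_reverse bs rest hlen,
        glue_append_singleton bs.reverse ((rest.map List.reverse).reverse) w0.reverse b
          (by simp [hlen])]
      simp

theorem qweight_append_singleton (xs : List (List A)) (t : List A) :
    qweight (xs ++ [t]) = qweight xs + xs.length * t.length := by
  simp only [qweight, List.length_append, List.length_singleton]
  rw [Finset.sum_range_succ]
  congr 1
  · exact Finset.sum_congr rfl fun i hi => by
      rw [List.getD_append _ _ _ _ (Finset.mem_range.1 hi)]
  · rw [List.getD_append_right] <;> simp

theorem qweight_phi (ws : List (List A)) :
    qweight ((ws.map List.reverse).reverse) = rweight ws := by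
  induction ws with
  | nil => rfl
  | cons w0 rest ih =>
    simp only [List.map_cons, List.reverse_cons, rweight]
    rw [qweight_append_singleton, ih]
    simp [Nat.add_comm]

end AuxDefs

section AuxEq
variable {A : Type*} [DecidableEq A]
open Polynomial

theorem mapDomain_list_sum {α β M : Type*} [AddCommMonoid M] (f : α → β)
    (l : List (α →₀ M)) :
    Finsupp.mapDomain f l.sum = (l.map (Finsupp.mapDomain f)).sum :=
  map_list_sum (Finsupp.mapDomain.addMonoidHom f) l

theorem aux_eq : ∀ (u v : List A),
    qShuffleAux u v =
      ((facts v.length u).map fun us =>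
        Finsupp.single (glue us v) ((X : Polynomial ℕ) ^ rweight us)).sum
  | [], v => by
    simp [qShuffleAux, facts_nil, glue_replicate, rweight_replicate]
  | a :: u, [] => by
    simp [qShuffleAux, facts, glue, rweight]
  | a :: u, b :: v => by
    rw [show qShuffleAux (a :: u) (b :: v) =
      (X : Polynomial ℕ) ^ (v.length + 1) •
          Finsupp.mapDomain (a :: ·) (qShuffleAux u (b :: v)) +
        Finsupp.mapDomain (b :: ·) (qShuffleAux (a :: u) v) from by
      simp [qShuffleAux]]
    rw [aux_eq u (b :: v), aux_eq (a :: u) v]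
    simp only [List.length_cons, facts, List.map_append, List.sum_append, List.map_map]
    congr 1
    · rw [mapDomain_list_sum, List.smul_sum,
        List.map_map, List.map_map]
      refine congrArg List.sum (List.map_congr_left fun ws hws => ?_)
      obtain ⟨h1, h2⟩ := (mem_facts _ _ _).1 hws
      cases ws with
      | nil => simp at h1
      | cons t rest =>
        have hr : rest.length = v.length + 1 := by simpa using h1
        simp only [Function.comp, Finsupp.mapDomain_single, Finsupp.smul_single,
          smul_eq_mul, ← pow_add, List.headI, List.tail_cons]
        rw [show glue ((a :: t) :: rest) (b :: v) = a :: glue (t :: rest) (b :: v) from by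
          simp [glue]]
        congr 2
        simp only [rweight, List.length_cons, hr]
        ring
    · rw [mapDomain_list_sum, List.map_map]
      refine congrArg List.sum (List.map_congr_left fun ws hws => ?_)
      simp only [Function.comp, Finsupp.mapDomain_single]
      rw [show glue ([] :: ws) (b :: v) = b :: glue ws v from by simp [glue]]
      simp [rweight]
termination_by u v => (v.length, u.length)

end AuxEq

/-- `u ⧢_q (a₁⋯a_n) = Σ q^{Σ_{i=1}^n i·|uᵢ|} · (u₀ a₁ u₁ a₂ ⋯ u_{n-1} a_n u_n)`,
the sum ranging over all factorizations `u = u₀ u₁ ⋯ u_n`. -/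
theorem qShuffle_eq_sum_factorizations (A : Type*) [Fintype A] [DecidableEq A]
    (u v : List A) :
    qShuffle u v =
      ∑ᶠ us ∈ {us : List (List A) | us.length = v.length + 1 ∧ us.flatten = u},
        Finsupp.single (glue us v) ((Polynomial.X : Polynomial ℕ) ^ qweight us) := by
  have hset : {us : List (List A) | us.length = v.length + 1 ∧ us.flatten = u}
      = ↑(facts v.length u).toFinset := by
    ext us; simp [mem_facts]
  rw [hset, finsum_mem_coe_finset, qShuffle, aux_eq, List.length_reverse,
    mapDomain_list_sum, List.map_map,
    ← List.sum_toFinset _ (facts_nodup v.length u.reverse)]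
  refine Finset.sum_nbij' (fun ws => (ws.map List.reverse).reverse)
    (fun us => (us.map List.reverse).reverse) ?_ ?_ ?_ ?_ ?_
  · intro ws hws
    simp only [List.mem_toFinset, mem_facts] at hws ⊢
    refine ⟨by simp [hws.1], ?_⟩
    rw [← List.reverse_flatten, hws.2, List.reverse_reverse]
  · intro us hus
    simp only [List.mem_toFinset, mem_facts] at hus ⊢
    refine ⟨by simp [hus.1], ?_⟩
    rw [← List.reverse_flatten, hus.2]
  · intro ws _
    simp [List.map_reverse, List.map_map, Function.comp_def]
  · intro us _
    simp [List.map_reverse, List.map_map, Function.comp_def]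
  · intro ws hws
    simp only [List.mem_toFinset, mem_facts] at hws
    have hlen : ws.length = v.reverse.length + 1 := by simpa using hws.1
    simp only [Function.comp, Finsupp.mapDomain_single]
    rw [qweight_phi ws, glue_reverse v.reverse ws hlen, List.reverse_reverse]
end
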